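/- For symmetric positive semidefinite matrices A₁, A₂ ∈ ℝ^{d×d}, the kernel of the parallel addition A₁ ∧ A₂ := A₁(A₁+A₂)†A₂ equals the sum (span of the union) of the kernels of A₁ and A₂. -/

import Mathlib

/-- `B` is the Moore–Penrose pseudoinverse of `A`. -/
def IsMoorePenroseInv {d : ℕ} (A B : Matrix (Fin d) (Fin d) ℝ) : Prop :=
  A * B * A = A ∧ B * A * B = B ∧ (A * B).transpose = A * B ∧ (B * A).transpose = B * A

open scoped Matrix
theorem ker_parallelSum {d : ℕ} (A₁ A₂ B : Matrix (Fin d) (Fin d) ℝ)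
    (h₁ : A₁.PosSemidef) (h₂ : A₂.PosSemidef)
    (hB : IsMoorePenroseInv (A₁ + A₂) B) :
    LinearMap.ker (A₁ * B * A₂).mulVecLin =
      LinearMap.ker A₁.mulVecLin ⊔ LinearMap.ker A₂.mulVecLin := by
  obtain ⟨hSBS, hBSB, hSB, hBS⟩ := hB
  set S := A₁ + A₂ with hS
  have hA1symm : A₁ᵀ = A₁ := by
    rw [← Matrix.conjTranspose_eq_transpose_of_trivial]; exact h₁.1.eq
  have hA2symm : A₂ᵀ = A₂ := by
    rw [← Matrix.conjTranspose_eq_transpose_of_trivial]; exact h₂.1.eq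
  have hSsymm : Sᵀ = S := by rw [hS, Matrix.transpose_add, hA1symm, hA2symm]
  -- kernel of the sum is contained in both kernels
  have hker : ∀ x : Fin d → ℝ, S *ᵥ x = 0 → A₁ *ᵥ x = 0 ∧ A₂ *ᵥ x = 0 := by
    intro x hx
    have hx' : x ⬝ᵥ (A₁ *ᵥ x) + x ⬝ᵥ (A₂ *ᵥ x) = 0 := by
      have : x ⬝ᵥ (S *ᵥ x) = 0 := by rw [hx, dotProduct_zero]
      simpa [hS, Matrix.add_mulVec, dotProduct_add] using this
    have p1 : (0:ℝ) ≤ x ⬝ᵥ (A₁ *ᵥ x) := by simpa using h₁.dotProduct_mulVec_nonneg x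
    have p2 : (0:ℝ) ≤ x ⬝ᵥ (A₂ *ᵥ x) := by simpa using h₂.dotProduct_mulVec_nonneg x
    have e1 : x ⬝ᵥ (A₁ *ᵥ x) = 0 := le_antisymm (by linarith) p1
    have e2 : x ⬝ᵥ (A₂ *ᵥ x) = 0 := le_antisymm (by linarith) p2
    constructor
    · exact (h₁.dotProduct_mulVec_zero_iff x).mp (by simpa using e1)
    · exact (h₂.dotProduct_mulVec_zero_iff x).mp (by simpa using e2)
  -- S * Bᵀ * S = S
  have hSBtS : S * Bᵀ * S = S := by
    calc S * Bᵀ * S = (Sᵀ * B * Sᵀ)ᵀ := by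
          simp [Matrix.transpose_mul, Matrix.mul_assoc]
      _ = S := by rw [hSsymm, hSBS, hSsymm]
  -- A₂ * Bᵀ * S = A₂ (pointwise then matrix)
  have hA2BtS : A₂ * Bᵀ * S = A₂ := by
    have hpt : ∀ x : Fin d → ℝ, (A₂ * Bᵀ * S) *ᵥ x = A₂ *ᵥ x := by
      intro x
      have hSdiff : S *ᵥ ((Bᵀ * S) *ᵥ x - x) = 0 := by
        rw [Matrix.mulVec_sub, Matrix.mulVec_mulVec, ← Matrix.mul_assoc, hSBtS, sub_self]
      have h2 := (hker _ hSdiff).2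
      rw [Matrix.mulVec_sub, sub_eq_zero] at h2
      calc (A₂ * Bᵀ * S) *ᵥ x = A₂ *ᵥ ((Bᵀ * S) *ᵥ x) := by
            rw [Matrix.mulVec_mulVec, Matrix.mul_assoc]
        _ = A₂ *ᵥ x := h2
    ext i j
    have h1 := congrFun (hpt (Pi.single j 1)) i
    simpa [Matrix.mulVec_single] using h1
  -- hence S * B * A₂ = A₂
  have hSBA2 : S * B * A₂ = A₂ := by
    calc S * B * A₂ = (A₂ᵀ * Bᵀ * Sᵀ)ᵀ := by
          simp [Matrix.transpose_mul, Matrix.mul_assoc]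
      _ = (A₂ * Bᵀ * S)ᵀ := by rw [hSsymm, hA2symm]
      _ = A₂ := by rw [hA2BtS, hA2symm]
  apply le_antisymm
  · -- ker (A₁ B A₂) ≤ ker A₁ ⊔ ker A₂
    intro x hx
    rw [LinearMap.mem_ker, Matrix.mulVecLin_apply] at hx
    have key : A₂ *ᵥ ((B * A₂) *ᵥ x) = A₂ *ᵥ x := by
      have hmat : A₂ * B * A₂ = S * B * A₂ - A₁ * B * A₂ := by
        rw [hS]; noncomm_ring
      calc A₂ *ᵥ ((B * A₂) *ᵥ x) = (A₂ * B * A₂) *ᵥ x := by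
            rw [Matrix.mulVec_mulVec, Matrix.mul_assoc]
        _ = (S * B * A₂) *ᵥ x - (A₁ * B * A₂) *ᵥ x := by
            rw [hmat, Matrix.sub_mulVec]
        _ = A₂ *ᵥ x := by rw [hSBA2, hx, sub_zero]
    refine Submodule.mem_sup.mpr ⟨(B * A₂) *ᵥ x, ?_, x - (B * A₂) *ᵥ x, ?_, by ring⟩
    · rw [LinearMap.mem_ker, Matrix.mulVecLin_apply, Matrix.mulVec_mulVec,
        ← Matrix.mul_assoc]
      exact hx
    · rw [LinearMap.mem_ker, Matrix.mulVecLin_apply, Matrix.mulVec_sub, key, sub_self]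
  · -- ker A₁ ⊔ ker A₂ ≤ ker (A₁ B A₂)
    rw [sup_le_iff]
    constructor
    · intro x hx
      rw [LinearMap.mem_ker, Matrix.mulVecLin_apply] at hx ⊢
      have hA2x : A₂ *ᵥ x = S *ᵥ x := by
        rw [hS, Matrix.add_mulVec, hx, zero_add]
      have hSdiff : S *ᵥ ((B * S) *ᵥ x - x) = 0 := by
        rw [Matrix.mulVec_sub, Matrix.mulVec_mulVec, ← Matrix.mul_assoc, hSBS, sub_self]
      have h1 := (hker _ hSdiff).1
      rw [Matrix.mulVec_sub, sub_eq_zero] at h1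
      calc (A₁ * B * A₂) *ᵥ x = A₁ *ᵥ (B *ᵥ (A₂ *ᵥ x)) := by
            rw [Matrix.mulVec_mulVec, Matrix.mulVec_mulVec]
        _ = A₁ *ᵥ ((B * S) *ᵥ x) := by rw [hA2x, ← Matrix.mulVec_mulVec]
        _ = A₁ *ᵥ x := h1
        _ = 0 := hx
    · intro x hx
      rw [LinearMap.mem_ker, Matrix.mulVecLin_apply] at hx ⊢
      rw [← Matrix.mulVec_mulVec, hx, Matrix.mulVec_zero]
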